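/- Let V ∈ ℝ^{k×t} be the Vandermonde matrix on distinct nodes λ_1 > ... > λ_k in [0,1] with t ≤ k, and let η = min_i(λ_i − λ_{i+1}). Let z ∈ ℝ^k be a t-sparse vector with ‖z‖_2 ≥ ρ > 0. Then ‖V^T z‖_2 ≥ (ρ/√k) · (η/2)^{t−1}. -/

import Mathlib

open Polynomial Finset

/-- ℓ¹ norm of the coefficients of a polynomial. -/
noncomputable def pl1 (p : Polynomial ℝ) : ℝ := ∑ j ∈ p.support, |p.coeff j|

lemma pl1_nonneg (p : Polynomial ℝ) : 0 ≤ pl1 p :=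
  Finset.sum_nonneg fun _ _ => abs_nonneg _

lemma pl1_eq_sum {p : Polynomial ℝ} {s : Finset ℕ} (h : p.support ⊆ s) :
    pl1 p = ∑ j ∈ s, |p.coeff j| :=
  Finset.sum_subset h (by
    intro j _ hj
    simp [Polynomial.notMem_support_iff.mp hj])

lemma pl1_add_le (p q : Polynomial ℝ) : pl1 (p + q) ≤ pl1 p + pl1 q := by
  rw [pl1_eq_sum (s := p.support ∪ q.support) (Polynomial.support_add),
    pl1_eq_sum (s := p.support ∪ q.support) (Finset.subset_union_left),
    pl1_eq_sum (s := p.support ∪ q.support) (Finset.subset_union_right), ← Finset.sum_add_distrib]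
  exact Finset.sum_le_sum fun j _ => by
    rw [Polynomial.coeff_add]; exact abs_add_le _ _

lemma pl1_C_mul (b : ℝ) (p : Polynomial ℝ) : pl1 (Polynomial.C b * p) ≤ |b| * pl1 p := by
  have hsub : (Polynomial.C b * p).support ⊆ p.support := by
    rw [← Polynomial.smul_eq_C_mul]
    exact Polynomial.support_smul b p
  rw [pl1_eq_sum hsub, pl1, Finset.mul_sum]
  exact Finset.sum_le_sum fun j _ => by
    rw [Polynomial.coeff_C_mul, abs_mul]

lemma pl1_mul_X (p : Polynomial ℝ) : pl1 (p * Polynomial.X) ≤ pl1 p := by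
  have hsub : (p * Polynomial.X).support ⊆ p.support.image (· + 1) := by
    intro j hj
    have hne : (p * Polynomial.X).coeff j ≠ 0 := Polynomial.mem_support_iff.mp hj
    rcases j with _ | j
    · simp [Polynomial.coeff_mul_X_zero] at hne
    · rw [Polynomial.coeff_mul_X] at hne
      exact Finset.mem_image.mpr ⟨j, Polynomial.mem_support_iff.mpr hne, rfl⟩
  rw [pl1_eq_sum hsub, Finset.sum_image (by intro a _ b _ h; exact Nat.add_right_cancel h)]
  exact le_of_eq (Finset.sum_congr rfl fun j _ => by rw [Polynomial.coeff_mul_X])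

lemma pl1_neg (p : Polynomial ℝ) : pl1 (-p) = pl1 p := by
  unfold pl1
  rw [Polynomial.support_neg]
  exact Finset.sum_congr rfl fun j _ => by rw [Polynomial.coeff_neg, abs_neg]

lemma pl1_mul_linear (p : Polynomial ℝ) (b : ℝ) :
    pl1 (p * (Polynomial.X - Polynomial.C b)) ≤ (1 + |b|) * pl1 p := by
  have h1 : p * (Polynomial.X - Polynomial.C b)
      = p * Polynomial.X + -(Polynomial.C b * p) := by ring
  calc pl1 (p * (Polynomial.X - Polynomial.C b))
      ≤ pl1 (p * Polynomial.X) + pl1 (-(Polynomial.C b * p)) := h1 ▸ pl1_add_le _ _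
    _ ≤ pl1 p + |b| * pl1 p := by
        rw [pl1_neg]
        exact add_le_add (pl1_mul_X p) (pl1_C_mul b p)
    _ = (1 + |b|) * pl1 p := by ring

lemma pl1_one : pl1 (1 : Polynomial ℝ) = 1 := by
  have h : (1 : Polynomial ℝ).support = {0} := by
    rw [← Polynomial.C_1, Polynomial.support_C one_ne_zero]
  unfold pl1
  rw [h]
  simp

lemma pl1_prod {ι : Type*} (T : Finset ι) (a : ι → ℝ) :
    pl1 (∏ i ∈ T, (Polynomial.X - Polynomial.C (a i))) ≤ ∏ i ∈ T, (1 + |a i|) := by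
  induction T using Finset.cons_induction with
  | empty => simp [pl1_one]
  | cons i T hi ih =>
      rw [Finset.prod_cons, Finset.prod_cons, mul_comm (Polynomial.X - Polynomial.C (a i))]
      calc pl1 ((∏ j ∈ T, (Polynomial.X - Polynomial.C (a j))) * (Polynomial.X - Polynomial.C (a i)))
          ≤ (1 + |a i|) * pl1 (∏ j ∈ T, (Polynomial.X - Polynomial.C (a j))) :=
            pl1_mul_linear _ _
        _ ≤ (1 + |a i|) * ∏ j ∈ T, (1 + |a j|) := by
            apply mul_le_mul_of_nonneg_left ih
            positivity

/-- Euclidean norm of a vector. -/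
noncomputable def enorm {n : Type*} [Fintype n] (x : n → ℝ) : ℝ :=
  Real.sqrt (∑ i, x i ^ 2)

/-- For the `k × t` Vandermonde matrix `V` on distinct nodes `λ₁ > ⋯ > λ_k` in `[0,1]`
with minimum consecutive gap `η`, and any `t`-sparse vector `z` with `‖z‖₂ ≥ ρ > 0`,
`‖Vᵀz‖₂ ≥ (ρ/√k)·(η/2)^{t-1}`. -/
theorem stmt17 (k t : ℕ) (ht : 1 ≤ t) (htk : t ≤ k) (lam : Fin k → ℝ)
    (hanti : StrictAnti lam) (h01 : ∀ i, lam i ∈ Set.Icc (0 : ℝ) 1)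
    (η : ℝ) (hη : 0 < η)
    (hgap : ∀ i j : Fin k, (j : ℕ) = (i : ℕ) + 1 → η ≤ lam i - lam j)
    (ρ : ℝ) (hρ : 0 < ρ) (z : Fin k → ℝ)
    (hsparse : (Finset.univ.filter fun i => z i ≠ 0).card ≤ t)
    (hz : ρ ≤ _root_.enorm z) :
    ρ / Real.sqrt k * (η / 2) ^ (t - 1) ≤
      _root_.enorm (fun j : Fin t => ∑ i : Fin k, lam i ^ (j : ℕ) * z i) := by
  classical
  set S : Finset (Fin k) := Finset.univ.filter (fun i => z i ≠ 0) with hS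
  set y : Fin t → ℝ := fun j => ∑ i : Fin k, lam i ^ (j : ℕ) * z i with hy
  set E : ℝ := enorm y with hE
  have hEnn : 0 ≤ E := Real.sqrt_nonneg _
  have hinj : Set.InjOn lam ↑S := hanti.injective.injOn
  -- each |y j| ≤ E
  have hyE : ∀ j : Fin t, |y j| ≤ E := by
    intro j
    rw [hE, _root_.enorm, ← Real.sqrt_sq_eq_abs]
    apply Real.sqrt_le_sqrt
    exact Finset.single_le_sum (f := fun j => y j ^ 2) (fun i _ => sq_nonneg _) (Finset.mem_univ j)
  -- separation
  have hsep : ∀ i j : Fin k, (i : ℕ) < (j : ℕ) → η ≤ lam i - lam j := by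
    intro i j hij
    have h1 : (i : ℕ) + 1 < k := lt_of_le_of_lt hij j.isLt
    have h2 := hgap i ⟨(i : ℕ) + 1, h1⟩ rfl
    have h3 : lam j ≤ lam ⟨(i : ℕ) + 1, h1⟩ := by
      rcases eq_or_lt_of_le (show ((⟨(i : ℕ) + 1, h1⟩ : Fin k) : ℕ) ≤ (j : ℕ) from hij) with h | h
      · exact le_of_eq (congrArg lam (Fin.ext h.symm) ▸ rfl)
      · exact le_of_lt (hanti h)
    linarith
  have habs : ∀ i j : Fin k, i ≠ j → η ≤ |lam i - lam j| := by
    intro i j hne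
    rcases lt_or_gt_of_ne (fun h : (i : ℕ) = (j : ℕ) => hne (Fin.ext h)) with h | h
    · have h2 := hsep i j h
      rw [abs_of_pos (by linarith)]; exact h2
    · have h2 := hsep j i h
      rw [abs_sub_comm, abs_of_pos (by linarith)]; exact h2
  -- power comparison
  have hpow : ((2 : ℝ) / η) ^ (S.card - 1) ≤ (2 / η) ^ (t - 1) := by
    by_cases hk2 : 2 ≤ k
    · have h0 : (0 : ℕ) < k := by omega
      have h1 : (1 : ℕ) < k := by omega
      have hlt : (⟨0, h0⟩ : Fin k) < ⟨1, h1⟩ := by simp [Fin.lt_def]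
      have hg := hsep ⟨0, h0⟩ ⟨1, h1⟩ (by simp)
      have hb0 := (h01 ⟨0, h0⟩).2
      have hb1 := (h01 ⟨1, h1⟩).1
      have hη2 : η ≤ 2 := by linarith
      have h1b : (1 : ℝ) ≤ 2 / η := (one_le_div hη).mpr hη2
      exact pow_le_pow_right₀ h1b (Nat.sub_le_sub_right hsparse 1)
    · have hk1 : k = 1 := by omega
      have ht1 : t = 1 := by omega
      have hc : S.card ≤ 1 := by omega
      have : S.card - 1 = t - 1 := by omega
      rw [this]
  -- key pointwise bound
  have hkey : ∀ m : Fin k, |z m| ≤ (2 / η) ^ (t - 1) * E := by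
    intro m
    by_cases hzm : z m = 0
    · rw [hzm, abs_zero]; positivity
    have hmS : m ∈ S := by simp [hS, hzm]
    set P : Polynomial ℝ := Lagrange.basis S lam m with hP
    have hdeg : P.natDegree < t := by
      rw [hP, Lagrange.natDegree_basis hinj hmS]
      omega
    -- interpolation identity
    have hid : z m = ∑ j : Fin t, P.coeff j * y j := by
      have hswap : ∑ j : Fin t, P.coeff j * y j
          = ∑ i : Fin k, P.eval (lam i) * z i := by
        rw [hy]
        simp only [Finset.mul_sum]
        rw [Finset.sum_comm]
        refine Finset.sum_congr rfl fun i _ => ?_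
        rw [Polynomial.eval_eq_sum_range' hdeg, Finset.sum_mul,
          ← Fin.sum_univ_eq_sum_range (fun j => P.coeff j * lam i ^ j * z i)]
        exact Finset.sum_congr rfl fun j _ => by ring
      rw [hswap, Finset.sum_eq_single m]
      · rw [hP, Lagrange.eval_basis_self hinj hmS, one_mul]
      · intro b _ hbm
        by_cases hzb : z b = 0
        · rw [hzb, mul_zero]
        · have hbS : b ∈ S := by simp [hS, hzb]
          rw [hP, Lagrange.eval_basis_of_ne (Ne.symm hbm) hbS, zero_mul]
      · intro hm; exact absurd (Finset.mem_univ m) hm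
    -- coefficient ℓ¹ bound
    have hcoef : pl1 P ≤ (2 / η) ^ (t - 1) := by
      have hPdef : P = Polynomial.C (∏ i ∈ S.erase m, (lam m - lam i)⁻¹)
          * ∏ i ∈ S.erase m, (Polynomial.X - Polynomial.C (lam i)) := by
        rw [hP, Lagrange.basis]
        rw [map_prod, ← Finset.prod_mul_distrib]
        rfl
      calc pl1 P ≤ |∏ i ∈ S.erase m, (lam m - lam i)⁻¹|
            * pl1 (∏ i ∈ S.erase m, (Polynomial.X - Polynomial.C (lam i))) := by
            rw [hPdef]; exact pl1_C_mul _ _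
        _ ≤ (∏ i ∈ S.erase m, |lam m - lam i|⁻¹) * ∏ i ∈ S.erase m, (1 + |lam i|) := by
            rw [abs_prod]
            simp only [abs_inv]
            apply mul_le_mul_of_nonneg_left (pl1_prod _ _)
            apply Finset.prod_nonneg
            intro i _
            positivity
        _ = ∏ i ∈ S.erase m, |lam m - lam i|⁻¹ * (1 + |lam i|) := by
            rw [Finset.prod_mul_distrib]
        _ ≤ ∏ i ∈ S.erase m, (2 / η) := by
            apply Finset.prod_le_prod
            · intro i _; positivity
            · intro i hi
              have hne : m ≠ i := (Finset.ne_of_mem_erase hi).symm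
              have h1 := habs m i hne
              have h2 : |lam i| ≤ 1 := by
                rw [abs_of_nonneg (h01 i).1]; exact (h01 i).2
              have h3 : |lam m - lam i|⁻¹ ≤ η⁻¹ := by
                apply inv_anti₀ hη h1
              calc |lam m - lam i|⁻¹ * (1 + |lam i|) ≤ η⁻¹ * 2 := by
                    apply mul_le_mul h3 (by linarith) (by positivity) (by positivity)
                _ = 2 / η := by ring
        _ = (2 / η) ^ (S.card - 1) := by
            rw [Finset.prod_const, Finset.card_erase_of_mem hmS]
        _ ≤ (2 / η) ^ (t - 1) := hpow
    calc |z m| = |∑ j : Fin t, P.coeff j * y j| := by rw [hid]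
      _ ≤ ∑ j : Fin t, |P.coeff j * y j| := Finset.abs_sum_le_sum_abs _ _
      _ ≤ ∑ j : Fin t, |P.coeff j| * E := by
          apply Finset.sum_le_sum
          intro j _
          rw [abs_mul]
          exact mul_le_mul_of_nonneg_left (hyE j) (abs_nonneg _)
      _ = (∑ j : Fin t, |P.coeff j|) * E := by rw [Finset.sum_mul]
      _ ≤ (2 / η) ^ (t - 1) * E := by
          apply mul_le_mul_of_nonneg_right _ hEnn
          calc ∑ j : Fin t, |P.coeff j|
              = ∑ j ∈ Finset.range t, |P.coeff j| :=
                Fin.sum_univ_eq_sum_range (fun j => |P.coeff j|) t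
            _ = pl1 P := (pl1_eq_sum (Polynomial.supp_subset_range hdeg)).symm
            _ ≤ (2 / η) ^ (t - 1) := hcoef
  -- assemble
  set C : ℝ := (2 / η) ^ (t - 1) with hC
  have hCpos : 0 < C := by positivity
  have hzE : _root_.enorm z ≤ Real.sqrt k * (C * E) := by
    rw [_root_.enorm]
    have : ∑ i : Fin k, z i ^ 2 ≤ ∑ _i : Fin k, (C * E) ^ 2 := by
      apply Finset.sum_le_sum
      intro i _
      rw [← sq_abs (z i)]
      apply pow_le_pow_left₀ (abs_nonneg _) (hkey i)
    calc Real.sqrt (∑ i : Fin k, z i ^ 2) ≤ Real.sqrt (∑ _i : Fin k, (C * E) ^ 2) :=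
          Real.sqrt_le_sqrt this
      _ = Real.sqrt (k * (C * E) ^ 2) := by rw [Finset.sum_const, Finset.card_univ,
          Fintype.card_fin, nsmul_eq_mul]
      _ = Real.sqrt k * (C * E) := by
          rw [Real.sqrt_mul (Nat.cast_nonneg k), Real.sqrt_sq (by positivity)]
  have hρk : ρ ≤ Real.sqrt k * (C * E) := le_trans hz hzE
  have hk0 : 0 < (k : ℝ) := by
    have : 0 < k := by omega
    exact_mod_cast this
  have hsk : 0 < Real.sqrt k := Real.sqrt_pos.mpr hk0
  have hone : (η / 2) ^ (t - 1) * C = 1 := by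
    rw [hC, ← mul_pow]
    rw [div_mul_div_comm]
    rw [show η * 2 / (2 * η) = 1 by field_simp]
    exact one_pow _
  have ha : 0 < (η / 2 : ℝ) ^ (t - 1) := by positivity
  rw [div_mul_eq_mul_div, div_le_iff₀ hsk]
  calc ρ * (η / 2) ^ (t - 1) ≤ Real.sqrt k * (C * E) * (η / 2) ^ (t - 1) :=
        mul_le_mul_of_nonneg_right hρk (le_of_lt ha)
    _ = E * Real.sqrt k * ((η / 2) ^ (t - 1) * C) := by ring
    _ = E * Real.sqrt k := by rw [hone, mul_one]
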